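/- Let G be a finite group such that the prime order element graph Γ(G) is planar. Then no prime p ≥ 7 divides |G|. -/

import Mathlib

/-- The prime order element graph of a group `G`: distinct `x, y` are adjacent
iff `orderOf (x * y)` is prime. -/
def primeOrderGraph (G : Type*) [Group G] : SimpleGraph G where
  Adj x y := x ≠ y ∧ (orderOf (x * y)).Prime
  symm := by
    constructor
    rintro x y ⟨hne, hp⟩
    refine ⟨hne.symm, ?_⟩
    have h : SemiconjBy x (y * x) (x * y) := by
      unfold SemiconjBy; group
    rwa [SemiconjBy.orderOf_eq x h]
  loopless := by constructor; rintro x ⟨hne, -⟩; exact hne rfl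

/-- `H` is a minor of `G`: there are nonempty, connected, pairwise disjoint
branch sets in `G`, one for each vertex of `H`, with edges between branch sets
of adjacent vertices of `H`. -/
def SimpleGraph.HasMinor {V W : Type*} (G : SimpleGraph V) (H : SimpleGraph W) : Prop :=
  ∃ B : W → Set V,
    (∀ w, (B w).Nonempty) ∧
    (∀ w, (G.induce (B w)).Connected) ∧
    (Pairwise fun w₁ w₂ => Disjoint (B w₁) (B w₂)) ∧
    (∀ w₁ w₂, H.Adj w₁ w₂ → ∃ v₁ ∈ B w₁, ∃ v₂ ∈ B w₂, G.Adj v₁ v₂)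

/-- Planarity à la Wagner: no `K₅` minor and no `K₃,₃` minor. -/
def SimpleGraph.IsPlanar {V : Type*} (G : SimpleGraph V) : Prop :=
  ¬ G.HasMinor (⊤ : SimpleGraph (Fin 5)) ∧
  ¬ G.HasMinor (completeBipartiteGraph (Fin 3) (Fin 3))

lemma induce_singleton_connected {V : Type*} (G : SimpleGraph V) (v : V) :
    (G.induce ({v} : Set V)).Connected := by
  rw [SimpleGraph.connected_iff]
  refine ⟨fun a b => ?_, ⟨⟨v, rfl⟩⟩⟩
  have : a = b := Subtype.ext (by rw [a.2, b.2])
  exact this ▸ SimpleGraph.Reachable.refl a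

private def expFun (p : ℕ) : Fin 3 ⊕ Fin 3 → ℕ
  | .inl ⟨0, _⟩ => 0
  | .inl ⟨1, _⟩ => 1
  | .inl ⟨_+2, _⟩ => p - 1
  | .inr ⟨0, _⟩ => 2
  | .inr ⟨1, _⟩ => 3
  | .inr ⟨_+2, _⟩ => p - 2

private lemma not_dvd_helper {p s : ℕ} (h1 : 0 < s)
    (h2 : s < p ∨ (p < s ∧ s < 2 * p)) : ¬ p ∣ s := by
  intro h
  rcases h2 with h2 | ⟨h2, h3⟩
  · have := Nat.eq_zero_of_dvd_of_lt h h2; omega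
  · have := Nat.eq_zero_of_dvd_of_lt (Nat.dvd_sub h (dvd_refl p)) (by omega); omega


theorem stmt_8 {G : Type*} [Group G] [Fintype G]
    (hplanar : (primeOrderGraph G).IsPlanar) :
    ∀ p : ℕ, p.Prime → 7 ≤ p → ¬ p ∣ Fintype.card G := by
  intro p hp hp7 hdvd
  haveI : Fact p.Prime := ⟨hp⟩
  obtain ⟨g, hg⟩ := exists_prime_orderOf_dvd_card p hdvd
  have hlt : ∀ w, expFun p w < p := by
    rintro (⟨i, hi⟩ | ⟨i, hi⟩) <;> interval_cases i <;> simp [expFun] <;> omega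
  have hne_exp : ∀ w₁ w₂ : Fin 3 ⊕ Fin 3, w₁ ≠ w₂ → expFun p w₁ ≠ expFun p w₂ := by
    rintro (⟨i, hi⟩ | ⟨i, hi⟩) (⟨j, hj⟩ | ⟨j, hj⟩) hne <;>
      interval_cases i <;> interval_cases j <;> simp_all [expFun] <;> omega
  have hne : ∀ w₁ w₂ : Fin 3 ⊕ Fin 3, w₁ ≠ w₂ → g ^ expFun p w₁ ≠ g ^ expFun p w₂ := by
    intro w₁ w₂ hw heq
    exact hne_exp w₁ w₂ hw (pow_injOn_Iio_orderOf
      (by simpa [hg] using hlt w₁) (by simpa [hg] using hlt w₂) heq)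
  have hsum : ∀ w₁ w₂ : Fin 3 ⊕ Fin 3,
      (completeBipartiteGraph (Fin 3) (Fin 3)).Adj w₁ w₂ →
      ¬ p ∣ expFun p w₁ + expFun p w₂ := by
    rintro (⟨i, hi⟩ | ⟨i, hi⟩) (⟨j, hj⟩ | ⟨j, hj⟩) hadj
    · simp at hadj
    · interval_cases i <;> interval_cases j <;> simp only [expFun] <;>
        exact not_dvd_helper (by omega) (by omega)
    · interval_cases i <;> interval_cases j <;> simp only [expFun] <;>
        exact not_dvd_helper (by omega) (by omega)
    · simp at hadj
  have horder : ∀ n : ℕ, ¬ p ∣ n → orderOf (g ^ n) = p := by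
    intro n hn
    have hc : Nat.gcd p n = 1 := hp.coprime_iff_not_dvd.mpr hn
    rw [orderOf_pow, hg, hc, Nat.div_one]
  refine hplanar.2 ⟨fun w => {g ^ expFun p w}, fun w => ⟨_, rfl⟩,
    fun w => induce_singleton_connected _ _, ?_, ?_⟩
  · intro w₁ w₂ hw
    exact Set.disjoint_singleton.mpr (hne w₁ w₂ hw)
  · intro w₁ w₂ hadj
    refine ⟨_, rfl, _, rfl, hne w₁ w₂ hadj.ne, ?_⟩
    rw [← pow_add, horder _ (hsum w₁ w₂ hadj)]
    exact hp
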